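/- (Lemma 5.4: minorization via controllability) Let Φ be a Markov transition kernel from ℝⁿ to ℝⁿ × ℝᵐ which has a jointly measurable density p(x, y) with respect to Lebesgue measure on ℝⁿ × ℝᵐ, and let Γ : ℝⁿ × ℝᵐ → ℝⁿ. Let C ⊂ ℝⁿ be compact and suppose there exist a point y* = (y₁*, y₂*) ∈ ℝⁿ × ℝᵐ, a constant β > 0, and an open neighborhood W of y* such that: (1) p(x, y) > β for all x ∈ C and all y ∈ W; (2) Γ is continuously differentiable on a neighborhood of y*, and the partial Jacobian of Γ with respect to the first (ℝⁿ) variable at y*, D_{y₁}Γ(y*), has nonzero determinant. Then there exist δ > 0 and an open neighborhood O₁ of Γ(y*) in ℝⁿ such that for every x ∈ C and every Borel set A ⊆ ℝⁿ, Φ(x, Γ⁻¹(A)) ≥ δ·Leb(A ∩ O₁), where Leb denotes Lebesgue measure on ℝⁿ. -/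

import Mathlib

open MeasureTheory ProbabilityTheory ENNReal

section AuxMinorization

section Aux

variable {n m : ℕ}

local notation "E" => (Fin n → ℝ)
local notation "F" => (Fin m → ℝ)

/-- The key geometric/measure-theoretic step. -/
theorem aux_rect {Γ : E × F → E} {W : Set (E × F)} (hΓmeas : Measurable Γ)
    (hW : IsOpen W) (ystar : E × F) (hyW : ystar ∈ W)
    (hC1 : ∃ Wd ∈ nhds ystar, ContDiffOn ℝ 1 Γ Wd)
    (hjac : (LinearMap.det
      ((fderiv ℝ (fun x₁ => Γ (x₁, ystar.2)) ystar.1 :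
        E →L[ℝ] E) : E →ₗ[ℝ] E)) ≠ 0) :
    ∃ K > (0:ℝ), ∃ O₁ : Set E, IsOpen O₁ ∧ Γ ystar ∈ O₁ ∧
      ∃ V : Set F, 0 < volume V ∧ volume V < ⊤ ∧
      ∀ A : Set E, MeasurableSet A →
        volume (A ∩ O₁) * volume V ≤ ENNReal.ofReal K * volume (Γ ⁻¹' A ∩ W) := by
  obtain ⟨Wd, hWd, hΓC1⟩ := hC1
  set O : Set (E × F) := interior Wd with hOdef
  have hO : IsOpen O := isOpen_interior
  have hyO : ystar ∈ O := mem_interior_iff_mem_nhds.2 hWd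
  have hΓO : ContDiffOn ℝ 1 Γ O := hΓC1.mono interior_subset
  set Ψ : E × F → E × F := fun y => (Γ y, y.2) with hΨdef
  have hΨO : ContDiffOn ℝ 1 Ψ O := hΓO.prodMk (contDiff_snd.contDiffOn)
  have hΓdiff : DifferentiableAt ℝ Γ ystar :=
    (hΓO.contDiffAt (hO.mem_nhds hyO)).differentiableAt one_ne_zero
  set DΓ : (E × F) →L[ℝ] E := fderiv ℝ Γ ystar with hDΓdef
  have hDΓ : HasFDerivAt Γ DΓ ystar := hΓdiff.hasFDerivAt
  have hDΓ' : HasFDerivAt Γ DΓ (ystar.1, ystar.2) := by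
    simpa using hDΓ
  have hincl : HasFDerivAt (fun x₁ : E => (x₁, ystar.2))
      (ContinuousLinearMap.inl ℝ E F) ystar.1 := hasFDerivAt_prodMk_left _ _
  have hpartial : HasFDerivAt (fun x₁ => Γ (x₁, ystar.2))
      (DΓ.comp (ContinuousLinearMap.inl ℝ E F)) ystar.1 := hDΓ'.comp ystar.1 hincl
  set D : E →L[ℝ] E := DΓ.comp (ContinuousLinearMap.inl ℝ E F) with hDdef
  have hdet : LinearMap.det (D : E →ₗ[ℝ] E) ≠ 0 := by
    rw [hpartial.fderiv] at hjac; exact hjac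
  set Deq : E ≃ₗ[ℝ] E := LinearMap.equivOfDetNeZero (D : E →ₗ[ℝ] E) hdet with hDeqdef
  set DeqL : E ≃L[ℝ] E := Deq.toContinuousLinearEquiv with hDeqLdef
  have hDeqL : ∀ a : E, DeqL a = D a := fun a => by
    simp [hDeqLdef, hDeqdef, LinearEquiv.coe_toContinuousLinearEquiv']
  set Dinv : E →L[ℝ] E := (DeqL.symm : E →L[ℝ] E) with hDinvdef
  -- the full derivative of Ψ as an equivalence
  set f : (E × F) →L[ℝ] (E × F) := DΓ.prod (ContinuousLinearMap.snd ℝ E F) with hfdef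
  set g : (E × F) →L[ℝ] (E × F) :=
    (Dinv.comp ((ContinuousLinearMap.fst ℝ E F) -
      (DΓ.comp (ContinuousLinearMap.inr ℝ E F)).comp (ContinuousLinearMap.snd ℝ E F))).prod
      (ContinuousLinearMap.snd ℝ E F) with hgdef
  have hsplit : ∀ a : E, ∀ b : F, DΓ (a, b) = D a + DΓ (0, b) := by
    intro a b
    have : (a, b) = (a, (0:F)) + ((0:E), b) := by simp
    rw [this, map_add]
    rfl
  have h1 : Function.LeftInverse g f := by
    intro y
    have : DΓ y - DΓ (0, y.2) = D y.1 := by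
      rw [show y = (y.1, y.2) from rfl, hsplit y.1 y.2]; abel
    simp only [hfdef, hgdef, ContinuousLinearMap.prod_apply, ContinuousLinearMap.comp_apply,
      ContinuousLinearMap.sub_apply, ContinuousLinearMap.coe_fst', ContinuousLinearMap.coe_snd',
      ContinuousLinearMap.inr_apply]
    rw [this]
    have : Dinv (D y.1) = y.1 := by
      rw [hDinvdef, ← hDeqL y.1]; exact DeqL.symm_apply_apply y.1
    rw [this]
  have h2 : Function.RightInverse g f := by
    intro y
    simp only [hfdef, hgdef, ContinuousLinearMap.prod_apply, ContinuousLinearMap.comp_apply,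
      ContinuousLinearMap.sub_apply, ContinuousLinearMap.coe_fst', ContinuousLinearMap.coe_snd',
      ContinuousLinearMap.inr_apply]
    set c : E := Dinv (y.1 - DΓ (0, y.2)) with hcdef
    have hDc : D c = y.1 - DΓ (0, y.2) := by
      rw [hcdef, hDinvdef, ← hDeqL]; exact DeqL.apply_symm_apply _
    rw [hsplit c y.2, hDc]
    simp
  set Lq : (E × F) ≃L[ℝ] (E × F) := ContinuousLinearEquiv.equivOfInverse f g h1 h2 with hLqdef
  have hΨf : HasFDerivAt Ψ f ystar := hDΓ.prodMk (hasFDerivAt_snd)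
  have hΨstrict : HasStrictFDerivAt Ψ (Lq : (E × F) →L[ℝ] (E × F)) ystar := by
    exact (hΨO.contDiffAt (hO.mem_nhds hyO)).hasStrictFDerivAt' hΨf one_ne_zero
  have hmap : Filter.map Ψ (nhds ystar) = nhds (Ψ ystar) :=
    hΨstrict.map_nhds_eq_of_equiv
  -- bound on the Jacobian determinant near ystar
  set K : ℝ := |(fderiv ℝ Ψ ystar).det| + 1 with hKdef
  have hKpos : 0 < K := by positivity
  have hcontd : ContinuousAt (fun y => |(fderiv ℝ Ψ y).det|) ystar := by
    have h1 : ContinuousAt (fderiv ℝ Ψ) ystar :=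
      (hΨO.continuousOn_fderiv_of_isOpen hO le_rfl).continuousAt (hO.mem_nhds hyO)
    exact ((ContinuousLinearMap.continuous_det.continuousAt).comp h1).abs
  have hev : ∀ᶠ y in nhds ystar, |(fderiv ℝ Ψ y).det| < K :=
    hcontd.eventually_lt_const (by rw [hKdef]; linarith)
  obtain ⟨U₃, hU₃prop, hU₃open, hyU₃⟩ := eventually_nhds_iff.mp hev
  set U : Set (E × F) := O ∩ W ∩ U₃ with hUdef
  have hUopen : IsOpen U := (hO.inter hW).inter hU₃open
  have hyU : ystar ∈ U := ⟨⟨hyO, hyW⟩, hyU₃⟩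
  have hUnhds : U ∈ nhds ystar := hUopen.mem_nhds hyU
  have hΨUnhds : Ψ '' U ∈ nhds (Ψ ystar) := by
    rw [← hmap, Filter.mem_map]
    exact Filter.mem_of_superset hUnhds (Set.subset_preimage_image Ψ U)
  obtain ⟨O₁, V, hO₁open, hO₁mem, hVopen, hVmem, hsub⟩ := mem_nhds_prod_iff'.mp hΨUnhds
  set V' : Set F := V ∩ Metric.ball ystar.2 1 with hV'def
  have hV'open : IsOpen V' := hVopen.inter Metric.isOpen_ball
  have hV'mem : ystar.2 ∈ V' := ⟨hVmem, by simp⟩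
  refine ⟨K, hKpos, O₁, hO₁open, hO₁mem, V', ?_, ?_, ?_⟩
  · exact hV'open.measure_pos volume ⟨ystar.2, hV'mem⟩
  · exact lt_of_le_of_lt (measure_mono Set.inter_subset_right) measure_ball_lt_top
  · intro A hA
    set s : Set (E × F) := Ψ ⁻¹' ((A ∩ O₁) ×ˢ V') ∩ U with hsdef
    have hΨmeas : Measurable Ψ := hΓmeas.prodMk measurable_snd
    have hsmeas : MeasurableSet s :=
      (hΨmeas ((hA.inter hO₁open.measurableSet).prod hV'open.measurableSet)).inter
        hUopen.measurableSet
    have hfd : ∀ y ∈ s, HasFDerivWithinAt Ψ (fderiv ℝ Ψ y) s y := by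
      intro y hy
      have hyO' : y ∈ O := hy.2.1.1
      have : DifferentiableAt ℝ Ψ y :=
        ((hΨO.contDiffAt (hO.mem_nhds hyO')).differentiableAt one_ne_zero)
      exact this.hasFDerivAt.hasFDerivWithinAt
    have hrect_sub : (A ∩ O₁) ×ˢ V' ⊆ Ψ '' s := by
      rintro ⟨u, v⟩ ⟨hu, hv⟩
      have : (u, v) ∈ Ψ '' U := hsub ⟨hu.2, hv.1⟩
      obtain ⟨y, hyU', hy⟩ := this
      refine ⟨y, ⟨?_, hyU'⟩, hy⟩
      simp only [Set.mem_preimage, hy]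
      exact Set.mk_mem_prod hu hv
    have hs_sub : s ⊆ Γ ⁻¹' A ∩ W := by
      rintro y ⟨hy1, hy2⟩
      exact ⟨hy1.1.1, hy2.1.2⟩
    haveI : (volume : Measure ((Fin n → ℝ) × (Fin m → ℝ))).IsAddHaarMeasure :=
      Measure.prod.instIsAddHaarMeasure _ _
    calc volume (A ∩ O₁) * volume V' = volume ((A ∩ O₁) ×ˢ V') := by
          rw [Measure.volume_eq_prod, Measure.prod_prod]
      _ ≤ volume (Ψ '' s) := measure_mono hrect_sub
      _ ≤ ∫⁻ y in s, ENNReal.ofReal |(fderiv ℝ Ψ y).det| :=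
          addHaar_image_le_lintegral_abs_det_fderiv volume hsmeas hfd
      _ ≤ ∫⁻ _ in s, ENNReal.ofReal K := by
          refine setLIntegral_mono measurable_const fun y hy => ?_
          exact ENNReal.ofReal_le_ofReal (le_of_lt (hU₃prop y hy.2.2))
      _ = ENNReal.ofReal K * volume s := by rw [setLIntegral_const]
      _ ≤ ENNReal.ofReal K * volume (Γ ⁻¹' A ∩ W) := by
          exact mul_le_mul_right (measure_mono hs_sub) _

end Aux


/-- **Minorization via controllability (Lemma 5.4).** Let `Φ` be a Markov kernel from
`ℝⁿ` to `ℝⁿ × ℝᵐ` with a jointly measurable density `p` with respect to Lebesgue measure,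
and let `Γ : ℝⁿ × ℝᵐ → ℝⁿ` be measurable. Let `C ⊂ ℝⁿ` be compact and suppose there are a
point `y* = (y₁*, y₂*)`, a constant `β > 0` and an open neighborhood `W` of `y*` such that
(1) `p(x,y) > β` for all `x ∈ C`, `y ∈ W`; (2) `Γ` is `C¹` on a neighborhood of `y*` and
the partial Jacobian `D_{y₁}Γ(y*)` has nonzero determinant. Then there exist `δ > 0` and
an open neighborhood `O₁` of `Γ(y*)` with `Φ(x, Γ⁻¹(A)) ≥ δ·Leb(A ∩ O₁)` for all `x ∈ C`
and all Borel `A ⊆ ℝⁿ`. -/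
theorem minorization_via_controllability {n m : ℕ}
    (Φ : Kernel (Fin n → ℝ) ((Fin n → ℝ) × (Fin m → ℝ))) [IsMarkovKernel Φ]
    (p : (Fin n → ℝ) → (Fin n → ℝ) × (Fin m → ℝ) → ℝ)
    (hpmeas : Measurable fun z : (Fin n → ℝ) × ((Fin n → ℝ) × (Fin m → ℝ)) => p z.1 z.2)
    (hpdens : ∀ x, ∀ B : Set ((Fin n → ℝ) × (Fin m → ℝ)), MeasurableSet B →
      Φ x B = ∫⁻ y in B, ENNReal.ofReal (p x y))
    (Γ : (Fin n → ℝ) × (Fin m → ℝ) → (Fin n → ℝ)) (hΓmeas : Measurable Γ)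
    (C : Set (Fin n → ℝ)) (hC : IsCompact C)
    (ystar : (Fin n → ℝ) × (Fin m → ℝ)) (β : ℝ) (hβ : 0 < β)
    (W : Set ((Fin n → ℝ) × (Fin m → ℝ))) (hW : IsOpen W) (hyW : ystar ∈ W)
    (hreach : ∀ x ∈ C, ∀ y ∈ W, β < p x y)
    (hC1 : ∃ Wd ∈ nhds ystar, ContDiffOn ℝ 1 Γ Wd)
    (hjac : (LinearMap.det
      ((fderiv ℝ (fun x₁ => Γ (x₁, ystar.2)) ystar.1 :
        (Fin n → ℝ) →L[ℝ] (Fin n → ℝ)) : (Fin n → ℝ) →ₗ[ℝ] (Fin n → ℝ))) ≠ 0) :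
    ∃ δ > (0 : ℝ), ∃ O₁ : Set (Fin n → ℝ), IsOpen O₁ ∧ Γ ystar ∈ O₁ ∧
      ∀ x ∈ C, ∀ A : Set (Fin n → ℝ), MeasurableSet A →
        ENNReal.ofReal δ * volume (A ∩ O₁) ≤ Φ x (Γ ⁻¹' A) := by
  obtain ⟨K, hK, O₁, hO₁open, hO₁mem, V, hVpos, hVfin, hkey⟩ :=
    aux_rect hΓmeas hW ystar hyW hC1 hjac
  have hvpos : 0 < (volume V).toReal := ENNReal.toReal_pos hVpos.ne' hVfin.ne
  refine ⟨β * (volume V).toReal / K, div_pos (mul_pos hβ hvpos) hK, O₁, hO₁open, hO₁mem, ?_⟩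
  intro x hx A hA
  have hAm : MeasurableSet (Γ ⁻¹' A) := hΓmeas hA
  have hAWm : MeasurableSet (Γ ⁻¹' A ∩ W) := hAm.inter hW.measurableSet
  have hpx : Measurable fun y => p x y :=
    hpmeas.comp (measurable_const.prodMk measurable_id)
  have step1 : ENNReal.ofReal β * volume (Γ ⁻¹' A ∩ W) ≤ Φ x (Γ ⁻¹' A) := by
    rw [hpdens x _ hAm]
    calc ENNReal.ofReal β * volume (Γ ⁻¹' A ∩ W)
        = ∫⁻ _ in Γ ⁻¹' A ∩ W, ENNReal.ofReal β := (setLIntegral_const _ _).symm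
      _ ≤ ∫⁻ y in Γ ⁻¹' A ∩ W, ENNReal.ofReal (p x y) := by
          refine setLIntegral_mono hpx.ennreal_ofReal fun y hy => ?_
          exact ENNReal.ofReal_le_ofReal (le_of_lt (hreach x hx y hy.2))
      _ ≤ ∫⁻ y in Γ ⁻¹' A, ENNReal.ofReal (p x y) :=
          lintegral_mono_set Set.inter_subset_left
  have hkey' := hkey A hA
  have h1 : ENNReal.ofReal (β * (volume V).toReal / K)
      = ENNReal.ofReal β * volume V / ENNReal.ofReal K := by
    rw [ENNReal.ofReal_div_of_pos hK, ENNReal.ofReal_mul hβ.le, ENNReal.ofReal_toReal hVfin.ne]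
  have h2 : volume (A ∩ O₁) * volume V / ENNReal.ofReal K ≤ volume (Γ ⁻¹' A ∩ W) :=
    ENNReal.div_le_of_le_mul (by rw [mul_comm (ENNReal.ofReal K)] at hkey'; exact hkey')
  calc ENNReal.ofReal (β * (volume V).toReal / K) * volume (A ∩ O₁)
      = ENNReal.ofReal β * (volume (A ∩ O₁) * volume V / ENNReal.ofReal K) := by
        rw [h1, div_eq_mul_inv, div_eq_mul_inv]; ring
    _ ≤ ENNReal.ofReal β * volume (Γ ⁻¹' A ∩ W) := mul_le_mul_right h2 _
    _ ≤ Φ x (Γ ⁻¹' A) := step1
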